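/- For finitely generated groups G₁ with symmetric generating set S₁ and G₂ with symmetric generating set S₂, the free product of the Cayley graphs Γ(G₁,S₁) ⋆ Γ(G₂,S₂) is isomorphic to the Cayley graph Γ(G₁ ⋆ G₂, S₁ ⊔ S₂) of the free product group. -/

import Mathlib

variable {ι : Type} [DecidableEq ι]

abbrev Letter (V : ι → Type) := Σ i, V i

def upd {V : ι → Type} (u : ∀ i, V i) : List (Letter V) → ∀ i, V i
  | [] => u
  | ⟨j, x⟩ :: w => Function.update (upd u w) j x

def Adm {V : ι → Type} (u : ∀ i, V i) (w : List (Letter V)) : Prop :=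
  w.Chain' (fun a b => a.1 ≠ b.1) ∧
    ∀ (a : Letter V) (p : List (Letter V)), a :: p <:+ w → a.2 ≠ upd u p a.1

def Word {V : ι → Type} (u : ∀ i, V i) := {w : List (Letter V) // Adm u w}

def emptyWord {V : ι → Type} (u : ∀ i, V i) : Word u :=
  ⟨[], by first | exact List.isChain_nil | exact List.IsChain.nil | simp, by intro a p h; simp at h⟩

def Pre {V : ι → Type} (G : ∀ i, SimpleGraph (V i)) (u : ∀ i, V i)
    (v w : List (Letter V)) : Prop :=
  (∃ (p : List (Letter V)) (j : ι) (a b : V j),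
      (G j).Adj a b ∧ v = ⟨j, a⟩ :: p ∧ w = ⟨j, b⟩ :: p) ∨
  (∃ (j : ι) (a : V j), (G j).Adj (upd u v j) a ∧ w = ⟨j, a⟩ :: v)

def freeProd {V : ι → Type} (G : ∀ i, SimpleGraph (V i)) (u : ∀ i, V i) :
    SimpleGraph (Word u) :=
  SimpleGraph.fromRel fun v w => Pre G u v.1 w.1

/-- The two-element family of vertex types for a binary free product. -/
def pV (α β : Type) : Bool → Type := fun b => match b with
  | false => α
  | true => β

/-- The two-element family of graphs for a binary free product. -/
def pG {α β : Type} (A : SimpleGraph α) (B : SimpleGraph β) :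
    ∀ b, SimpleGraph (pV α β b) := fun b => match b with
  | false => A
  | true => B

/-- The base tuple for a binary free product. -/
def pu {α β : Type} (a : α) (b : β) : ∀ i, pV α β i := fun i => match i with
  | false => a
  | true => b

/-- The binary free product `A ⋆ B` of graphs, with base vertices `a`, `b`. -/
def freeProd2 {α β : Type} (A : SimpleGraph α) (B : SimpleGraph β) (a : α) (b : β) :
    SimpleGraph (Word (pu a b)) :=
  freeProd (pG A B) (pu a b)

/-- The Cayley graph of a group with respect to a generating set. -/
def cayley (H : Type) [Group H] (S : Set H) : SimpleGraph H :=
  SimpleGraph.fromRel fun g h => ∃ s ∈ S, h = g * s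

section Generic

variable {V : ι → Type}

theorem upd_cons_same (u : ∀ i, V i) (j : ι) (x : V j) (p : List (Letter V)) :
    upd u (⟨j, x⟩ :: p) j = x := by
  show Function.update (upd u p) j x j = x
  simp

theorem upd_cons_ne (u : ∀ i, V i) {j k : ι} (h : k ≠ j) (x : V k) (p : List (Letter V)) :
    upd u (⟨k, x⟩ :: p) j = upd u p j := by
  show Function.update (upd u p) k x j = upd u p j
  simp [Function.update_of_ne (Ne.symm h)]

theorem adm_nil (u : ∀ i, V i) : Adm u ([] : List (Letter V)) :=
  ⟨List.isChain_nil, by intro a p h; simp at h⟩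

theorem adm_cons {u : ∀ i, V i} {j : ι} {x : V j} {p : List (Letter V)} :
    Adm u (⟨j, x⟩ :: p) ↔
      Adm u p ∧ (∀ b ∈ p.head?, j ≠ Sigma.fst b) ∧ x ≠ upd u p j := by
  constructor
  · rintro ⟨hch, hsuf⟩
    replace hch := List.isChain_cons.1 hch
    refine ⟨⟨hch.2, fun a q hq => hsuf a q (hq.trans (List.suffix_cons _ _))⟩, hch.1, ?_⟩
    exact hsuf ⟨j, x⟩ p (List.suffix_refl _)
  · rintro ⟨⟨hch, hsuf⟩, hhd, hx⟩
    refine ⟨List.isChain_cons.2 ⟨hhd, hch⟩, ?_⟩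
    intro a q hq
    rcases List.suffix_cons_iff.1 hq with h | h
    · obtain ⟨h1, h2⟩ := List.cons_eq_cons.mp h
      subst h2
      cases h1
      exact hx
    · exact hsuf a q h

variable [∀ i, Group (V i)]

/-- Normal-form letters: each letter is divided by the previous value of its coordinate. -/
def nf (u : ∀ i, V i) : List (Letter V) → List (Σ i, V i)
  | [] => []
  | ⟨j, x⟩ :: p => ⟨j, (upd u p j)⁻¹ * x⟩ :: nf u p

/-- Inverse of `nf`. -/
def fnf (u : ∀ i, V i) : List (Σ i, V i) → List (Letter V)
  | [] => []
  | ⟨j, y⟩ :: l => ⟨j, upd u (fnf u l) j * y⟩ :: fnf u l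

theorem map_fst_nf (u : ∀ i, V i) : ∀ w : List (Letter V),
    (nf u w).map Sigma.fst = w.map Sigma.fst
  | [] => rfl
  | ⟨j, x⟩ :: p => by simp [nf, map_fst_nf u p]

theorem map_fst_fnf (u : ∀ i, V i) : ∀ l : List (Σ i, V i),
    (fnf u l).map Sigma.fst = l.map Sigma.fst
  | [] => rfl
  | ⟨j, y⟩ :: l => by simp [fnf, map_fst_fnf u l]

theorem nf_fnf (u : ∀ i, V i) : ∀ l : List (Σ i, V i), nf u (fnf u l) = l
  | [] => rfl
  | ⟨j, y⟩ :: l => by simp [fnf, nf, nf_fnf u l]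

theorem fnf_nf (u : ∀ i, V i) : ∀ w : List (Letter V), fnf u (nf u w) = w
  | [] => rfl
  | ⟨j, x⟩ :: p => by simp [nf, fnf, fnf_nf u p]

theorem head?_fst_eq (u : ∀ i, V i) (l : List (Σ i, V i)) {j : ι}
    (h : ∀ b ∈ l.head?, j ≠ Sigma.fst b) :
    ∀ b ∈ (fnf u l).head?, j ≠ Sigma.fst b := by
  cases l with
  | nil => simp [fnf]
  | cons a l =>
    obtain ⟨k, y⟩ := a
    intro b hb
    simp only [fnf, List.head?_cons, Option.mem_def, Option.some.injEq] at hb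
    subst hb
    exact h ⟨k, y⟩ (by simp)

theorem adm_fnf (u : ∀ i, V i) : ∀ l : List (Σ i, V i),
    (∀ a ∈ l, Sigma.snd a ≠ 1) → l.Chain' (fun a b => a.1 ≠ b.1) → Adm u (fnf u l)
  | [] => fun _ _ => adm_nil u
  | ⟨j, y⟩ :: l => by
    intro hne hch
    replace hch := List.isChain_cons.1 hch
    show Adm u (⟨j, upd u (fnf u l) j * y⟩ :: fnf u l)
    rw [adm_cons]
    refine ⟨adm_fnf u l (fun a ha => hne a (List.mem_cons_of_mem _ ha)) hch.2, ?_, ?_⟩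
    · exact head?_fst_eq u l hch.1
    · have : y ≠ 1 := hne ⟨j, y⟩ List.mem_cons_self
      simpa using this

theorem nf_ne_one {u : ∀ i, V i} : ∀ {w : List (Letter V)}, Adm u w →
    ∀ a ∈ nf u w, Sigma.snd a ≠ 1 := by
  intro w
  induction w with
  | nil => intro _ a ha; simp [nf] at ha
  | cons b p ih =>
    obtain ⟨j, x⟩ := b
    intro hadm a ha
    rw [adm_cons] at hadm
    rcases List.mem_cons.1 ha with h | h
    · subst h
      simp only [ne_eq, inv_mul_eq_one]
      exact fun h => hadm.2.2 h.symm
    · exact ih hadm.1 a h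

theorem nf_chain {u : ∀ i, V i} {w : List (Letter V)}
    (h : w.Chain' (fun a b => a.1 ≠ b.1)) :
    (nf u w).Chain' (fun a b => a.1 ≠ b.1) := by
  have h1 : ((nf u w).map Sigma.fst).Chain' (· ≠ ·) := by
    rw [map_fst_nf]
    exact (List.isChain_map Sigma.fst).2 h
  exact (List.isChain_map Sigma.fst).1 h1

end Generic

section Equiv

open Monoid

variable {V : ι → Type} [∀ i, Group (V i)]

/-- The reduced `CoprodI` word associated to an admissible graph word. -/
def toNFword (u : ∀ i, V i) (w : Word u) : CoprodI.Word V where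
  toList := (nf u w.1).reverse
  ne_one := by
    intro a ha
    exact nf_ne_one w.2 a (List.mem_reverse.1 ha)
  chain_ne := by
    rw [List.isChain_reverse]
    exact (nf_chain w.2.1).imp fun a b h => Ne.symm h

/-- The product map from lists of letters to the free product. -/
def phiL (u : ∀ i, V i) (w : List (Letter V)) : CoprodI V :=
  ((nf u w).reverse.map fun l => CoprodI.of l.snd).prod

theorem phiL_nil (u : ∀ i, V i) : phiL u ([] : List (Letter V)) = 1 := rfl

theorem phiL_cons (u : ∀ i, V i) (j : ι) (x : V j) (p : List (Letter V)) :
    phiL u (⟨j, x⟩ :: p) = phiL u p * CoprodI.of ((upd u p j)⁻¹ * x) := by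
  show ((nf u (⟨j, x⟩ :: p)).reverse.map fun l => CoprodI.of l.snd).prod = _
  rw [show nf u (⟨j, x⟩ :: p) = ⟨j, (upd u p j)⁻¹ * x⟩ :: nf u p from rfl]
  simp [phiL]

theorem prod_toNFword (u : ∀ i, V i) (w : Word u) :
    (toNFword u w).prod = phiL u w.1 := rfl

/-- The bijection between admissible graph words and the free product. -/
noncomputable def wEquiv (u : ∀ i, V i) : Word u ≃ CoprodI V := by
  classical
  exact
  { toFun := fun w => phiL u w.1
    invFun := fun g =>
      ⟨fnf u ((CoprodI.Word.equiv g).toList.reverse),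
        adm_fnf u _ (fun a ha => (CoprodI.Word.equiv g).ne_one a (List.mem_reverse.1 ha))
          (by refine List.isChain_reverse.2 ?_
              exact (CoprodI.Word.equiv g).chain_ne.imp fun a b h => Ne.symm h)⟩
    left_inv := by
      intro w
      apply Subtype.ext
      show fnf u ((CoprodI.Word.equiv (phiL u w.1)).toList.reverse) = w.1
      have h1 : phiL u w.1 = CoprodI.Word.equiv.symm (toNFword u w) := rfl
      rw [h1, Equiv.apply_symm_apply]
      show fnf u ((nf u w.1).reverse.reverse) = w.1
      rw [List.reverse_reverse, fnf_nf]
    right_inv := by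
      intro g
      show phiL u (fnf u ((CoprodI.Word.equiv g).toList.reverse)) = g
      rw [phiL, nf_fnf, List.reverse_reverse]
      exact Equiv.symm_apply_apply CoprodI.Word.equiv g }

theorem wEquiv_apply (u : ∀ i, V i) (w : Word u) : wEquiv u w = phiL u w.1 := rfl

end Equiv

section BoolSpec

open Monoid

variable {G₁ G₂ : Type} [Group G₁] [Group G₂]

instance pVGroup : ∀ b, Group (pV G₁ G₂ b)
  | false => (inferInstance : Group G₁)
  | true => (inferInstance : Group G₂)

/-- The two generating sets, indexed. -/
def Sb (S₁ : Set G₁) (S₂ : Set G₂) : ∀ b, Set (pV G₁ G₂ b)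
  | false => S₁
  | true => S₂

/-- The inclusions of the factors into the coproduct. -/
def nu : ∀ b, pV G₁ G₂ b →* Monoid.Coprod G₁ G₂
  | false => Monoid.Coprod.inl
  | true => Monoid.Coprod.inr

/-- The factor inclusions into `CoprodI`, with the factor types unfolded. -/
def iotaF : G₁ →* Monoid.CoprodI (pV G₁ G₂) := @CoprodI.of Bool (pV G₁ G₂) _ false

def iotaT : G₂ →* Monoid.CoprodI (pV G₁ G₂) := @CoprodI.of Bool (pV G₁ G₂) _ true

/-- The isomorphism between `CoprodI` over the Bool-indexed family and the binary coprod. -/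
noncomputable def muIso : Monoid.CoprodI (pV G₁ G₂) ≃* Monoid.Coprod G₁ G₂ :=
  MonoidHom.toMulEquiv (CoprodI.lift nu)
    (Monoid.Coprod.lift iotaF iotaT)
    (by
      apply CoprodI.ext_hom
      intro i
      apply MonoidHom.ext
      intro x
      cases i <;>
        simp [nu, iotaF, iotaT, Monoid.CoprodI.lift_of, Monoid.Coprod.lift_apply_inl,
          Monoid.Coprod.lift_apply_inr] <;> rfl)
    (by
      apply Monoid.Coprod.hom_ext <;> apply MonoidHom.ext <;> intro x <;>
        simp [nu, iotaF, iotaT, Monoid.CoprodI.lift_of, Monoid.Coprod.lift_apply_inl,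
          Monoid.Coprod.lift_apply_inr] <;> rfl)

theorem muIso_of (j : Bool) (y : pV G₁ G₂ j) :
    muIso (CoprodI.of y) = nu j y :=
  CoprodI.lift_of nu y

theorem cayley_adj {H : Type} [Group H] {S : Set H} (hsymm : ∀ s ∈ S, s⁻¹ ∈ S) {g h : H} :
    (cayley H S).Adj g h ↔ g ≠ h ∧ ∃ s ∈ S, h = g * s := by
  unfold cayley
  rw [SimpleGraph.fromRel_adj]
  constructor
  · rintro ⟨hne, h1 | h2⟩
    · exact ⟨hne, h1⟩
    · obtain ⟨s, hsS, hgs⟩ := h2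
      exact ⟨hne, s⁻¹, hsymm s hsS, by rw [hgs]; group⟩
  · rintro ⟨hne, hs⟩; exact ⟨hne, Or.inl hs⟩

variable {S₁ : Set G₁} {S₂ : Set G₂}

theorem pG_adj (h1 : ∀ s ∈ S₁, s⁻¹ ∈ S₁) (h2 : ∀ s ∈ S₂, s⁻¹ ∈ S₂)
    (j : Bool) {x y : pV G₁ G₂ j} :
    (pG (cayley G₁ S₁) (cayley G₂ S₂) j).Adj x y ↔ x ≠ y ∧ ∃ s ∈ Sb S₁ S₂ j, y = x * s := by
  cases j
  · exact cayley_adj h1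
  · exact cayley_adj h2

theorem Sb_symm (h1 : ∀ s ∈ S₁, s⁻¹ ∈ S₁) (h2 : ∀ s ∈ S₂, s⁻¹ ∈ S₂) :
    ∀ j, ∀ s ∈ Sb S₁ S₂ j, s⁻¹ ∈ Sb S₁ S₂ j
  | false => h1
  | true => h2

theorem Sb_ne_one (h1 : (1 : G₁) ∉ S₁) (h2 : (1 : G₂) ∉ S₂) :
    ∀ j, ∀ s ∈ Sb S₁ S₂ j, s ≠ (1 : pV G₁ G₂ j)
  | false => fun s hs he => h1 (he ▸ hs)
  | true => fun s hs he => h2 (he ▸ hs)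

/-- The generating set of the coproduct. -/
def SU (S₁ : Set G₁) (S₂ : Set G₂) : Set (Monoid.Coprod G₁ G₂) :=
  (Monoid.Coprod.inl : G₁ →* Monoid.Coprod G₁ G₂) '' S₁ ∪
    (Monoid.Coprod.inr : G₂ →* Monoid.Coprod G₁ G₂) '' S₂

theorem nu_mem (j : Bool) {s : pV G₁ G₂ j} (hs : s ∈ Sb S₁ S₂ j) :
    nu j s ∈ SU S₁ S₂ := by
  cases j
  · exact Or.inl ⟨s, hs, rfl⟩
  · exact Or.inr ⟨s, hs, rfl⟩

theorem mem_nu {s' : Monoid.Coprod G₁ G₂} (hs' : s' ∈ SU S₁ S₂) :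
    ∃ (j : Bool) (s : pV G₁ G₂ j), s ∈ Sb S₁ S₂ j ∧ s' = nu j s := by
  rcases hs' with ⟨s, hs, rfl⟩ | ⟨s, hs, rfl⟩
  · exact ⟨false, s, hs, rfl⟩
  · exact ⟨true, s, hs, rfl⟩

theorem mul_ne_left_aux {H : Type} [Group H] {a b : H} (h : b ≠ 1) : a * b ≠ a :=
  fun hh => h (mul_left_cancel (hh.trans (mul_one a).symm))

theorem phiC (u : ∀ b, pV G₁ G₂ b) (j : Bool) (x : pV G₁ G₂ j)
    (p : List (Letter (pV G₁ G₂))) :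
    muIso (phiL u (⟨j, x⟩ :: p)) =
      muIso (phiL u p) * nu j ((upd u p j)⁻¹ * x) := by
  rw [phiL_cons, map_mul, muIso_of]

theorem key_fwd (hsymm₁ : ∀ s ∈ S₁, s⁻¹ ∈ S₁) (hsymm₂ : ∀ s ∈ S₂, s⁻¹ ∈ S₂)
    (u : ∀ b, pV G₁ G₂ b) (v w : List (Letter (pV G₁ G₂)))
    (hpre : Pre (pG (cayley G₁ S₁) (cayley G₂ S₂)) u v w) :
    ∃ s' ∈ SU S₁ S₂, muIso (phiL u w) = muIso (phiL u v) * s' := by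
  rcases hpre with ⟨p, j, a, b, hab, rfl, rfl⟩ | ⟨j, a, hadj, rfl⟩
  · rw [pG_adj hsymm₁ hsymm₂] at hab
    obtain ⟨hne, s, hsS, rfl⟩ := hab
    refine ⟨nu j s, nu_mem j hsS, ?_⟩
    rw [phiC, phiC,
      show ((upd u p j)⁻¹ * (a * s)) = ((upd u p j)⁻¹ * a) * s from (mul_assoc _ _ _).symm,
      map_mul, mul_assoc]
  · rw [pG_adj hsymm₁ hsymm₂] at hadj
    obtain ⟨hne, s, hsS, rfl⟩ := hadj
    refine ⟨nu j s, nu_mem j hsS, ?_⟩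
    rw [phiC, inv_mul_cancel_left]

theorem phi_injective (u : ∀ b, pV G₁ G₂ b) :
    Function.Injective fun w : Word u => muIso (phiL u w.1) :=
  ((wEquiv u).trans muIso.toEquiv).injective

theorem key_bwd (hsymm₁ : ∀ s ∈ S₁, s⁻¹ ∈ S₁) (hsymm₂ : ∀ s ∈ S₂, s⁻¹ ∈ S₂)
    (hone₁ : (1 : G₁) ∉ S₁) (hone₂ : (1 : G₂) ∉ S₂)
    (u : ∀ b, pV G₁ G₂ b) (v w : Word u) {s' : Monoid.Coprod G₁ G₂}
    (hs' : s' ∈ SU S₁ S₂)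
    (heq : muIso (phiL u w.1) = muIso (phiL u v.1) * s') :
    Pre (pG (cayley G₁ S₁) (cayley G₂ S₂)) u v.1 w.1 ∨
      Pre (pG (cayley G₁ S₁) (cayley G₂ S₂)) u w.1 v.1 := by
  obtain ⟨j, s, hsS, rfl⟩ := mem_nu hs'
  have hs1 : s ≠ 1 := Sb_ne_one hone₁ hone₂ j s hsS
  have Einj := phi_injective u
  have hva := v.2
  rcases hvl : v.1 with _ | ⟨⟨k, x⟩, p⟩ <;> rw [hvl] at heq hva
  · -- v is the empty word: w is obtained by prepending a letter
    have hadm : Adm u ([⟨j, upd u [] j * s⟩] : List (Letter (pV G₁ G₂))) :=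
      adm_cons.mpr ⟨adm_nil u, by simp, mul_ne_left_aux hs1⟩
    have hw : w = ⟨[⟨j, upd u [] j * s⟩], hadm⟩ := by
      apply Einj
      show muIso (phiL u w.1) = muIso (phiL u [⟨j, upd u [] j * s⟩])
      rw [heq, phiC, inv_mul_cancel_left]
    left; right
    refine ⟨j, upd u [] j * s, ?_, ?_⟩
    · rw [pG_adj hsymm₁ hsymm₂]
      exact ⟨(mul_ne_left_aux hs1).symm, s, hsS, rfl⟩
    · rw [hw]
  · -- v starts with a letter ⟨k, x⟩
    rw [adm_cons] at hva
    by_cases hkj : k = j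
    · subst hkj
      by_cases hxs : x * s = upd u p k
      · -- the new letter cancels the head of v
        have hw : w = ⟨p, hva.1⟩ := by
          apply Einj
          show muIso (phiL u w.1) = muIso (phiL u p)
          rw [heq, phiC, mul_assoc, ← map_mul, mul_assoc ((upd u p k)⁻¹) x s, hxs,
            inv_mul_cancel, map_one, mul_one]
        right; right
        refine ⟨k, x, ?_, ?_⟩
        · rw [pG_adj hsymm₁ hsymm₂, hw]
          refine ⟨fun h => hva.2.2 h.symm, s⁻¹, Sb_symm hsymm₁ hsymm₂ k s hsS, ?_⟩
          show x = upd u p k * s⁻¹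
          rw [← hxs, mul_assoc, mul_inv_cancel, mul_one]
        · rw [hw]
      · -- the new letter merges with the head of v
        have hadm : Adm u (⟨k, x * s⟩ :: p) :=
          adm_cons.mpr ⟨hva.1, hva.2.1, hxs⟩
        have hw : w = ⟨⟨k, x * s⟩ :: p, hadm⟩ := by
          apply Einj
          show muIso (phiL u w.1) = muIso (phiL u (⟨k, x * s⟩ :: p))
          rw [heq, phiC, phiC, mul_assoc, ← map_mul, mul_assoc]
        left; left
        refine ⟨p, k, x, x * s, ?_, rfl, by rw [hw]⟩
        rw [pG_adj hsymm₁ hsymm₂]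
        exact ⟨(mul_ne_left_aux hs1).symm, s, hsS, rfl⟩
    · -- indices differ: w is obtained by prepending a letter
      have hadm : Adm u (⟨j, upd u (⟨k, x⟩ :: p) j * s⟩ :: ⟨k, x⟩ :: p) := by
        refine adm_cons.mpr ⟨hvl ▸ v.2, ?_, mul_ne_left_aux hs1⟩
        intro b hb
        simp only [List.head?_cons, Option.mem_def, Option.some.injEq] at hb
        subst hb
        exact Ne.symm hkj
      have hw : w = ⟨⟨j, upd u (⟨k, x⟩ :: p) j * s⟩ :: ⟨k, x⟩ :: p, hadm⟩ := by
        apply Einj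
        show muIso (phiL u w.1) =
          muIso (phiL u (⟨j, upd u (⟨k, x⟩ :: p) j * s⟩ :: ⟨k, x⟩ :: p))
        conv_rhs => rw [phiC, inv_mul_cancel_left]
        rw [heq]
      left; right
      refine ⟨j, upd u (⟨k, x⟩ :: p) j * s, ?_, by rw [hw]⟩
      rw [pG_adj hsymm₁ hsymm₂]
      exact ⟨(mul_ne_left_aux hs1).symm, s, hsS, rfl⟩

theorem freeProd_adj {V : ι → Type} (G : ∀ i, SimpleGraph (V i)) (u : ∀ i, V i)
    (v w : Word u) :
    (freeProd G u).Adj v w ↔ v ≠ w ∧ (Pre G u v.1 w.1 ∨ Pre G u w.1 v.1) :=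
  SimpleGraph.fromRel_adj _ _ _

theorem cayley_adj' {H : Type} [Group H] (S : Set H) (a b : H) :
    (cayley H S).Adj a b ↔ a ≠ b ∧ ((∃ t ∈ S, b = a * t) ∨ ∃ t ∈ S, a = b * t) :=
  SimpleGraph.fromRel_adj _ _ _

/-- The free product of the Cayley graphs of two finitely generated groups
(with finite symmetric generating sets not containing the identity) is
isomorphic to the Cayley graph of the free product of the groups with
respect to the disjoint union of the generating sets. -/
theorem stmt14 {G₁ G₂ : Type} [Group G₁] [Group G₂] (S₁ : Set G₁) (S₂ : Set G₂)
    (hfin₁ : S₁.Finite) (hfin₂ : S₂.Finite)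
    (hsymm₁ : ∀ s ∈ S₁, s⁻¹ ∈ S₁) (hsymm₂ : ∀ s ∈ S₂, s⁻¹ ∈ S₂)
    (hone₁ : (1 : G₁) ∉ S₁) (hone₂ : (1 : G₂) ∉ S₂)
    (hgen₁ : Subgroup.closure S₁ = ⊤) (hgen₂ : Subgroup.closure S₂ = ⊤) :
    Nonempty (freeProd2 (cayley G₁ S₁) (cayley G₂ S₂) 1 1
      ≃g cayley (Monoid.Coprod G₁ G₂)
          (⇑(Monoid.Coprod.inl : G₁ →* Monoid.Coprod G₁ G₂) '' S₁ ∪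
           ⇑(Monoid.Coprod.inr : G₂ →* Monoid.Coprod G₁ G₂) '' S₂)) := by
  set u : ∀ b, pV G₁ G₂ b := pu (1 : G₁) (1 : G₂) with hu
  have Einj := phi_injective (G₁ := G₁) (G₂ := G₂) u
  refine ⟨⟨(wEquiv u).trans muIso.toEquiv, ?_⟩⟩
  intro v w
  show (cayley (Monoid.Coprod G₁ G₂) (SU S₁ S₂)).Adj
      (muIso (phiL u v.1)) (muIso (phiL u w.1)) ↔ _
  rw [cayley_adj']
  show _ ↔ (freeProd (pG (cayley G₁ S₁) (cayley G₂ S₂)) u).Adj v w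
  rw [freeProd_adj]
  constructor
  · rintro ⟨hne, hrel⟩
    have hvw : v ≠ w := fun he => hne (by rw [he])
    refine ⟨hvw, ?_⟩
    rcases hrel with ⟨t, htS, hts⟩ | ⟨t, htS, hts⟩
    · exact key_bwd hsymm₁ hsymm₂ hone₁ hone₂ u v w htS hts
    · exact (key_bwd hsymm₁ hsymm₂ hone₁ hone₂ u w v htS hts).symm
  · rintro ⟨hvw, hpre | hpre⟩
    · obtain ⟨t, htS, hts⟩ := key_fwd hsymm₁ hsymm₂ u v.1 w.1 hpre
      exact ⟨fun he => hvw (Einj he), Or.inl ⟨t, htS, hts⟩⟩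
    · obtain ⟨t, htS, hts⟩ := key_fwd hsymm₁ hsymm₂ u w.1 v.1 hpre
      exact ⟨fun he => hvw (Einj he), Or.inr ⟨t, htS, hts⟩⟩
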